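/- The function x ↦ sinc²(x²) is integrable on ℝ and ∫_ℝ sinc²(x²) dx = 4√π/3. -/

import Mathlib

open MeasureTheory Real Set Filter Topology

set_option maxHeartbeats 1000000

/-- `sinc_ x = sin x / x` for `x ≠ 0`, and `sinc_ 0 = 1`. -/
noncomputable def sinc_ (x : ℝ) : ℝ := if x = 0 then 1 else Real.sin x / x

lemma intJ {s : ℝ} (hs : 0 < s) :
    ∫ t in Ioi (0:ℝ), Real.sin t ^ 2 * Real.exp (-(s * t)) = 2 / (s * (s ^ 2 + 4)) := by
  have hs4 : s ^ 2 + 4 ≠ 0 := by positivity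
  set F : ℝ → ℝ := fun t =>
    Real.exp (-(s * t)) * (-(1 / (2 * s)) + (s * Real.cos (2 * t) - 2 * Real.sin (2 * t)) / (2 * (s ^ 2 + 4))) with hF
  have hderiv : ∀ t : ℝ, HasDerivAt F (Real.sin t ^ 2 * Real.exp (-(s * t))) t := by
    intro t
    have h1 : HasDerivAt (fun t : ℝ => Real.exp (-(s * t))) (-s * Real.exp (-(s * t))) t := by
      have := (Real.hasDerivAt_exp (-(s * t))).comp t (((hasDerivAt_id t).const_mul s).neg)
      simpa [Function.comp_def, Pi.neg_apply, mul_comm] using this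
    have hc : HasDerivAt (fun t : ℝ => Real.cos (2 * t)) (-2 * Real.sin (2 * t)) t := by
      have := (Real.hasDerivAt_cos (2 * t)).comp t ((hasDerivAt_id t).const_mul 2)
      simpa [Function.comp_def, mul_comm] using this
    have hsn : HasDerivAt (fun t : ℝ => Real.sin (2 * t)) (2 * Real.cos (2 * t)) t := by
      have := (Real.hasDerivAt_sin (2 * t)).comp t ((hasDerivAt_id t).const_mul 2)
      simpa [Function.comp_def, mul_comm] using this
    have h2 : HasDerivAt (fun t : ℝ =>
        -(1 / (2 * s)) + (s * Real.cos (2 * t) - 2 * Real.sin (2 * t)) / (2 * (s ^ 2 + 4)))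
        ((s * (-2 * Real.sin (2 * t)) - 2 * (2 * Real.cos (2 * t))) / (2 * (s ^ 2 + 4))) t := by
      exact (((hc.const_mul s).sub (hsn.const_mul 2)).div_const _).const_add _
    have := h1.mul h2
    refine this.congr_deriv ?_
    have hsin : Real.sin t ^ 2 = 1 / 2 - Real.cos (2 * t) / 2 := Real.sin_sq_eq_half_sub t
    rw [hsin]
    field_simp
    ring
  have hint : IntegrableOn (fun t => Real.sin t ^ 2 * Real.exp (-(s * t))) (Ioi (0:ℝ)) := by
    refine (exp_neg_integrableOn_Ioi 0 hs).mono' ?_ ?_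
    · exact ((Real.measurable_sin.pow_const 2).mul
        ((measurable_id.const_mul s).neg.exp)).aestronglyMeasurable
    · filter_upwards with t
      have h1 : |Real.sin t| ≤ 1 := Real.abs_sin_le_one t
      have : Real.sin t ^ 2 ≤ 1 := by
        calc Real.sin t ^ 2 = |Real.sin t| ^ 2 := by rw [sq_abs]
        _ ≤ 1 := by nlinarith [abs_nonneg (Real.sin t)]
      have he : (0:ℝ) < Real.exp (-(s * t)) := Real.exp_pos _
      rw [Real.norm_eq_abs, abs_of_nonneg (by positivity)]
      calc Real.sin t ^ 2 * Real.exp (-(s * t)) ≤ 1 * Real.exp (-(s * t)) := by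
            exact mul_le_mul_of_nonneg_right this he.le
      _ = Real.exp (-s * t) := by rw [one_mul]; ring_nf
  have htend : Tendsto F atTop (𝓝 0) := by
    have hC : ∀ t : ℝ, ‖F t‖ ≤ (1 / (2 * s) + (s + 2) / (2 * (s ^ 2 + 4))) * Real.exp (-(s * t)) := by
      intro t
      rw [hF]
      simp only [norm_mul, Real.norm_eq_abs, Real.abs_exp]
      rw [mul_comm]
      gcongr
      calc |(-(1 / (2 * s)) + (s * Real.cos (2 * t) - 2 * Real.sin (2 * t)) / (2 * (s ^ 2 + 4)))|
          ≤ |(-(1 / (2 * s)))| + |(s * Real.cos (2 * t) - 2 * Real.sin (2 * t)) / (2 * (s ^ 2 + 4))| := abs_add_le _ _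
        _ ≤ 1 / (2 * s) + (s + 2) / (2 * (s ^ 2 + 4)) := by
            gcongr
            · rw [abs_neg, abs_of_nonneg (by positivity)]
            · rw [abs_div, abs_of_nonneg (show (0:ℝ) ≤ 2 * (s ^ 2 + 4) by positivity)]
              gcongr
              calc |s * Real.cos (2 * t) - 2 * Real.sin (2 * t)|
                  ≤ |s * Real.cos (2 * t)| + |2 * Real.sin (2 * t)| := abs_sub _ _
                _ ≤ s + 2 := by
                    rw [abs_mul, abs_mul, abs_of_nonneg hs.le, abs_of_nonneg (by norm_num : (0:ℝ) ≤ 2)]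
                    have := Real.abs_cos_le_one (2 * t)
                    have := Real.abs_sin_le_one (2 * t)
                    nlinarith [hs.le]
    have hexp : Tendsto (fun t : ℝ => (1 / (2 * s) + (s + 2) / (2 * (s ^ 2 + 4))) * Real.exp (-(s * t))) atTop (𝓝 0) := by
      rw [show (0:ℝ) = (1 / (2 * s) + (s + 2) / (2 * (s ^ 2 + 4))) * 0 by ring]
      refine Tendsto.const_mul _ ?_
      have : Tendsto (fun t : ℝ => -(s * t)) atTop atBot := by
        apply tendsto_neg_atBot_iff.mpr
        exact Tendsto.const_mul_atTop hs tendsto_id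
      exact Real.tendsto_exp_atBot.comp this
    exact squeeze_zero_norm hC hexp
  have := integral_Ioi_of_hasDerivAt_of_tendsto' (f := F)
    (fun x _ => hderiv x) hint htend
  rw [this, hF]
  simp only [mul_zero, Real.exp_zero, Real.cos_zero, Real.sin_zero, neg_zero]
  field_simp
  ring

lemma intK : ∫ u in Ioi (0:ℝ), u ^ 2 / (u ^ 4 + 4) = π / 4 := by
  have hpos1 : ∀ u : ℝ, 0 < u ^ 2 - 2 * u + 2 := by intro u; nlinarith [sq_nonneg (u - 1)]
  have hpos2 : ∀ u : ℝ, 0 < u ^ 2 + 2 * u + 2 := by intro u; nlinarith [sq_nonneg (u + 1)]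
  set F : ℝ → ℝ := fun u =>
    (1 / 8) * (Real.log (u ^ 2 - 2 * u + 2) - Real.log (u ^ 2 + 2 * u + 2))
      + (1 / 4) * (Real.arctan (u - 1) + Real.arctan (u + 1)) with hF
  have hderiv : ∀ u : ℝ, HasDerivAt F (u ^ 2 / (u ^ 4 + 4)) u := by
    intro u
    have hq1 : HasDerivAt (fun u : ℝ => u ^ 2 - 2 * u + 2) (2 * u - 2) u := by
      simpa using (((hasDerivAt_pow 2 u).sub ((hasDerivAt_id u).const_mul 2)).add_const 2)
    have hq2 : HasDerivAt (fun u : ℝ => u ^ 2 + 2 * u + 2) (2 * u + 2) u := by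
      simpa using (((hasDerivAt_pow 2 u).add ((hasDerivAt_id u).const_mul 2)).add_const 2)
    have hl1 : HasDerivAt (fun u : ℝ => Real.log (u ^ 2 - 2 * u + 2))
        ((2 * u - 2) / (u ^ 2 - 2 * u + 2)) u := hq1.log (hpos1 u).ne'
    have hl2 : HasDerivAt (fun u : ℝ => Real.log (u ^ 2 + 2 * u + 2))
        ((2 * u + 2) / (u ^ 2 + 2 * u + 2)) u := hq2.log (hpos2 u).ne'
    have ha1 : HasDerivAt (fun u : ℝ => Real.arctan (u - 1)) (1 / (1 + (u - 1) ^ 2)) u := by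
      have := (Real.hasDerivAt_arctan (u - 1)).comp u ((hasDerivAt_id u).sub_const 1)
      simpa [Function.comp_def] using this
    have ha2 : HasDerivAt (fun u : ℝ => Real.arctan (u + 1)) (1 / (1 + (u + 1) ^ 2)) u := by
      have := (Real.hasDerivAt_arctan (u + 1)).comp u ((hasDerivAt_id u).add_const 1)
      simpa [Function.comp_def] using this
    have := (((hl1.sub hl2).const_mul (1/8 : ℝ)).add ((ha1.add ha2).const_mul (1/4 : ℝ)))
    refine this.congr_deriv ?_
    have h1 := (hpos1 u).ne'
    have h2 := (hpos2 u).ne'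
    have h3 : (1 : ℝ) + (u - 1) ^ 2 ≠ 0 := by positivity
    have h4 : (1 : ℝ) + (u + 1) ^ 2 ≠ 0 := by positivity
    have h5 : (u:ℝ) ^ 4 + 4 ≠ 0 := by positivity
    rw [show (1 : ℝ) + (u - 1) ^ 2 = u ^ 2 - 2 * u + 2 by ring,
      show (1 : ℝ) + (u + 1) ^ 2 = u ^ 2 + 2 * u + 2 by ring, eq_div_iff h5]
    linear_combination (u / 4 * (u ^ 2 + 2 * u + 2)) * mul_inv_cancel₀ h1
      - (u / 4 * (u ^ 2 - 2 * u + 2)) * mul_inv_cancel₀ h2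
  have hint : IntegrableOn (fun u : ℝ => u ^ 2 / (u ^ 4 + 4)) (Ioi (0:ℝ)) := by
    refine ((integrable_inv_one_add_sq.const_mul 2).restrict (s := Ioi 0)).mono' ?_ ?_
    · exact ((continuous_pow 2).div
        (by continuity) (fun u => by positivity)).aestronglyMeasurable.restrict
    · filter_upwards with u
      have h5 : (0:ℝ) < u ^ 4 + 4 := by positivity
      have h6 : (0:ℝ) < 1 + u ^ 2 := by positivity
      rw [Real.norm_eq_abs, abs_of_nonneg (by positivity)]
      rw [div_le_iff₀ h5, mul_comm 2, inv_mul_eq_div, div_mul_eq_mul_div, le_div_iff₀ h6]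
      nlinarith [sq_nonneg (u ^ 2 - 1), sq_nonneg u, sq_nonneg (u * u)]
  have htend : Tendsto F atTop (𝓝 (π / 4)) := by
    have hlog : Tendsto (fun u : ℝ => (1 / 8 : ℝ) * (Real.log (u ^ 2 - 2 * u + 2) - Real.log (u ^ 2 + 2 * u + 2))) atTop (𝓝 0) := by
      have hratio : Tendsto (fun u : ℝ => (u ^ 2 - 2 * u + 2) / (u ^ 2 + 2 * u + 2)) atTop (𝓝 1) := by
        have h1 : Tendsto (fun u : ℝ => (1 - 2 / u + 2 / u ^ 2) / (1 + 2 / u + 2 / u ^ 2)) atTop (𝓝 1) := by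
          have hu1 : Tendsto (fun u : ℝ => 2 / u) atTop (𝓝 0) :=
            tendsto_const_nhds.div_atTop tendsto_id
          have hu2 : Tendsto (fun u : ℝ => 2 / u ^ 2) atTop (𝓝 0) :=
            tendsto_const_nhds.div_atTop (tendsto_pow_atTop (by norm_num))
          have hnum : Tendsto (fun u : ℝ => 1 - 2 / u + 2 / u ^ 2) atTop (𝓝 1) := by
            have := (tendsto_const_nhds (x := (1:ℝ)) (f := atTop)).sub hu1 |>.add hu2
            simpa using this
          have hden : Tendsto (fun u : ℝ => 1 + 2 / u + 2 / u ^ 2) atTop (𝓝 1) := by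
            have := (tendsto_const_nhds (x := (1:ℝ)) (f := atTop)).add hu1 |>.add hu2
            simpa using this
          have h := hnum.div hden one_ne_zero
          rw [div_one] at h
          exact h
        refine h1.congr' ?_
        filter_upwards [eventually_gt_atTop (0:ℝ)] with u hu
        have hu2 : (u:ℝ) ^ 2 ≠ 0 := by positivity
        field_simp
      have : Tendsto (fun u : ℝ => Real.log ((u ^ 2 - 2 * u + 2) / (u ^ 2 + 2 * u + 2))) atTop (𝓝 0) := by
        have := (Real.continuousAt_log one_ne_zero).tendsto.comp hratio
        simpa only [Function.comp_def, Real.log_one] using this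
      have heq : ∀ᶠ u : ℝ in atTop, Real.log ((u ^ 2 - 2 * u + 2) / (u ^ 2 + 2 * u + 2))
          = Real.log (u ^ 2 - 2 * u + 2) - Real.log (u ^ 2 + 2 * u + 2) := by
        filter_upwards with u
        exact Real.log_div (hpos1 u).ne' (hpos2 u).ne'
      have := this.congr' heq
      simpa using this.const_mul (1/8 : ℝ)
    have harct : Tendsto (fun u : ℝ => (1 / 4 : ℝ) * (Real.arctan (u - 1) + Real.arctan (u + 1))) atTop (𝓝 (π / 4)) := by
      have t1 : Tendsto (fun u : ℝ => Real.arctan (u - 1)) atTop (𝓝 (π / 2)) :=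
        (Real.tendsto_arctan_atTop.mono_right nhdsWithin_le_nhds).comp (tendsto_atTop_add_const_right _ (-1) tendsto_id |>.congr (by intro x; simp [sub_eq_add_neg]))
      have t2 : Tendsto (fun u : ℝ => Real.arctan (u + 1)) atTop (𝓝 (π / 2)) :=
        (Real.tendsto_arctan_atTop.mono_right nhdsWithin_le_nhds).comp (tendsto_atTop_add_const_right _ 1 tendsto_id)
      have := (t1.add t2).const_mul (1/4 : ℝ)
      convert this using 2
      ring
    have h := hlog.add harct
    rw [show (0:ℝ) + π / 4 = π / 4 by ring] at h
    exact h
  have := integral_Ioi_of_hasDerivAt_of_tendsto' (f := F) (fun x _ => hderiv x) hint htend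
  have hF0 : F 0 = 0 := by
    rw [hF]
    norm_num
  rw [this, hF0, sub_zero]

lemma cont_sqrt_div : Continuous (fun s : ℝ => s ^ ((1:ℝ)/2) / (s ^ 2 + 4)) :=
  (Real.continuous_rpow_const (by norm_num)).div
    (by continuity) (fun s => by positivity)

lemma intsqrt : ∫ s in Ioi (0:ℝ), s ^ ((1:ℝ)/2) / (s ^ 2 + 4) = π / 2 := by
  rw [← integral_comp_rpow_Ioi (fun s => s ^ ((1:ℝ)/2) / (s ^ 2 + 4)) (p := 2) two_ne_zero]
  have : ∀ x ∈ Ioi (0:ℝ), (|(2:ℝ)| * x ^ ((2:ℝ) - 1)) • ((x ^ (2:ℝ)) ^ ((1:ℝ)/2) / ((x ^ (2:ℝ)) ^ 2 + 4))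
      = 2 * (x ^ 2 / (x ^ 4 + 4)) := by
    intro x hx
    have hx0 : (0:ℝ) < x := hx
    have h1 : x ^ (2:ℝ) = x ^ (2:ℕ) := by rw [← Real.rpow_natCast x 2]; norm_num
    have h2 : (x ^ (2:ℝ)) ^ ((1:ℝ)/2) = x := by
      rw [← Real.rpow_mul hx0.le]; norm_num
    have h3 : x ^ ((2:ℝ) - 1) = x := by norm_num
    rw [h2, h3, smul_eq_mul, h1]
    have h4 : ((x ^ (2:ℕ)) : ℝ) ^ 2 = x ^ 4 := by ring
    rw [h4]
    have hx4 : x ^ 4 + 4 ≠ 0 := by positivity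
    field_simp
    ring
  rw [setIntegral_congr_fun measurableSet_Ioi this, integral_const_mul, intK]
  ring

lemma intsqrt_integrable : IntegrableOn (fun s : ℝ => s ^ ((1:ℝ)/2) / (s ^ 2 + 4)) (Ioi 0) := by
  have hmeas : AEStronglyMeasurable (fun s : ℝ => s ^ ((1:ℝ)/2) / (s ^ 2 + 4)) volume := cont_sqrt_div.aestronglyMeasurable
  rw [← Ioc_union_Ioi_eq_Ioi (zero_le_one (α := ℝ))]
  refine IntegrableOn.union ?_ ?_
  · refine Integrable.mono' (g := fun _ => (1/4 : ℝ))
      (integrableOn_const (C := (1/4:ℝ)) measure_Ioc_lt_top.ne)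
      hmeas.restrict ?_
    filter_upwards [ae_restrict_mem measurableSet_Ioc] with s hs
    have hs0 : (0:ℝ) < s := hs.1
    have h1 : s ^ ((1:ℝ)/2) ≤ 1 := Real.rpow_le_one hs0.le hs.2 (by norm_num)
    have h2 : (4:ℝ) ≤ s ^ 2 + 4 := by nlinarith [sq_nonneg s]
    rw [Real.norm_eq_abs, abs_of_nonneg (by positivity)]
    exact div_le_div₀ (by norm_num) h1 (by norm_num) h2
  · refine Integrable.mono' (g := fun s => s ^ (-3/2 : ℝ))
      (integrableOn_Ioi_rpow_of_lt (show (-3/2:ℝ) < -1 by norm_num) one_pos)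
      hmeas.restrict ?_
    filter_upwards [ae_restrict_mem measurableSet_Ioi] with s hs
    have hs1 : (1:ℝ) < s := hs
    have hs0 : (0:ℝ) < s := lt_trans one_pos hs1
    rw [Real.norm_eq_abs, abs_of_nonneg (by positivity)]
    have h1 : s ^ ((1:ℝ)/2) / (s ^ 2 + 4) ≤ s ^ ((1:ℝ)/2) / s ^ 2 := by
      apply div_le_div_of_nonneg_left (by positivity) (by positivity)
      nlinarith
    refine h1.trans ?_
    have h2 : (s:ℝ) ^ (2:ℕ) = s ^ ((2:ℕ):ℝ) := (Real.rpow_natCast s 2).symm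
    rw [h2, ← Real.rpow_sub hs0]
    norm_num

lemma intJ_integrable {s : ℝ} (hs : 0 < s) :
    IntegrableOn (fun t => Real.sin t ^ 2 * Real.exp (-(s * t))) (Ioi (0:ℝ)) := by
  refine (exp_neg_integrableOn_Ioi 0 hs).mono' ?_ ?_
  · exact ((Real.measurable_sin.pow_const 2).mul
      ((measurable_id.const_mul s).neg.exp)).aestronglyMeasurable
  · filter_upwards with t
    have h1 : Real.sin t ^ 2 ≤ 1 := by
      have := Real.abs_sin_le_one t
      calc Real.sin t ^ 2 = |Real.sin t| ^ 2 := by rw [sq_abs]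
      _ ≤ 1 := by nlinarith [abs_nonneg (Real.sin t)]
    have he : (0:ℝ) < Real.exp (-(s * t)) := Real.exp_pos _
    rw [Real.norm_eq_abs, abs_of_nonneg (by positivity)]
    calc Real.sin t ^ 2 * Real.exp (-(s * t)) ≤ 1 * Real.exp (-(s * t)) :=
          mul_le_mul_of_nonneg_right h1 he.le
    _ = Real.exp (-s * t) := by rw [one_mul]; ring_nf

noncomputable def fker (s t : ℝ) : ℝ := s ^ ((3:ℝ)/2) * (Real.sin t ^ 2 * Real.exp (-(s * t)))

lemma fker_nonneg {s : ℝ} (hs : 0 ≤ s) (t : ℝ) : 0 ≤ fker s t := by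
  unfold fker
  have : (0:ℝ) ≤ s ^ ((3:ℝ)/2) := Real.rpow_nonneg hs _
  positivity

lemma fker_slice {s : ℝ} (hs : 0 < s) :
    ∫ t in Ioi (0:ℝ), fker s t = 2 * (s ^ ((1:ℝ)/2) / (s ^ 2 + 4)) := by
  have : ∫ t in Ioi (0:ℝ), fker s t
      = s ^ ((3:ℝ)/2) * ∫ t in Ioi (0:ℝ), Real.sin t ^ 2 * Real.exp (-(s * t)) := by
    unfold fker; exact integral_const_mul _ _
  rw [this, intJ hs]
  have h32 : s ^ ((3:ℝ)/2) = s ^ ((1:ℝ)/2) * s := by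
    rw [show (3:ℝ)/2 = 1/2 + 1 by norm_num, Real.rpow_add hs, Real.rpow_one]
  rw [h32]
  have h1 : s ≠ 0 := hs.ne'
  have h2 : s ^ 2 + 4 ≠ 0 := by positivity
  field_simp

lemma keyI : ∫ t in Ioi (0:ℝ), Real.sin t ^ 2 * t ^ (-(5:ℝ)/2) = 4 * Real.sqrt π / 3 := by
  have hcont : Continuous (Function.uncurry fker) := by
    apply Continuous.mul
    · exact (Real.continuous_rpow_const (by norm_num)).comp continuous_fst
    · exact ((Real.continuous_sin.comp continuous_snd).pow 2).mul
        (((continuous_fst.mul continuous_snd).neg).rexp)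
  have hfmeas : AEStronglyMeasurable (Function.uncurry fker)
      ((volume.restrict (Ioi (0:ℝ))).prod (volume.restrict (Ioi (0:ℝ)))) :=
    hcont.aestronglyMeasurable
  have hInt : Integrable (Function.uncurry fker)
      ((volume.restrict (Ioi (0:ℝ))).prod (volume.restrict (Ioi (0:ℝ)))) := by
    rw [integrable_prod_iff hfmeas]
    constructor
    · filter_upwards [ae_restrict_mem measurableSet_Ioi] with s hs
      have h := (intJ_integrable hs).const_mul (s ^ ((3:ℝ)/2))
      simpa [Function.uncurry, fker] using h
    · refine Integrable.congr (intsqrt_integrable.const_mul 2) ?_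
      filter_upwards [ae_restrict_mem measurableSet_Ioi] with s hs
      have hs0 : (0:ℝ) < s := hs
      have hnn : (fun t => ‖Function.uncurry fker (s, t)‖) = fun t => fker s t :=
        funext fun t => by
          rw [Function.uncurry_apply_pair, Real.norm_eq_abs, abs_of_nonneg (fker_nonneg hs0.le t)]
      show 2 * (s ^ ((1:ℝ)/2) / (s ^ 2 + 4)) = ∫ t, ‖Function.uncurry fker (s, t)‖ ∂(volume.restrict (Ioi (0:ℝ)))
      rw [hnn]
      exact (fker_slice hs0).symm
  have hswap := integral_integral_swap (f := fker)
    (μ := volume.restrict (Ioi (0:ℝ))) (ν := volume.restrict (Ioi (0:ℝ))) hInt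
  have hLHS : ∫ s in Ioi (0:ℝ), ∫ t in Ioi (0:ℝ), fker s t = π := by
    have h1 : ∫ s in Ioi (0:ℝ), ∫ t in Ioi (0:ℝ), fker s t
        = ∫ s in Ioi (0:ℝ), 2 * (s ^ ((1:ℝ)/2) / (s ^ 2 + 4)) :=
      setIntegral_congr_fun measurableSet_Ioi (fun s hs => fker_slice hs)
    rw [h1, integral_const_mul, intsqrt]
    ring
  have hGamma : Real.Gamma ((5:ℝ)/2) = 3 * Real.sqrt π / 4 := by
    rw [show (5:ℝ)/2 = 3/2 + 1 by norm_num, Real.Gamma_add_one (by norm_num),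
      show (3:ℝ)/2 = 1/2 + 1 by norm_num, Real.Gamma_add_one (by norm_num),
      Real.Gamma_one_half_eq]
    ring
  have hRHS : ∫ t in Ioi (0:ℝ), ∫ s in Ioi (0:ℝ), fker s t
      = Real.Gamma ((5:ℝ)/2) * ∫ t in Ioi (0:ℝ), Real.sin t ^ 2 * t ^ (-(5:ℝ)/2) := by
    rw [← integral_const_mul]
    refine setIntegral_congr_fun measurableSet_Ioi ?_
    intro t ht
    dsimp only
    have ht0 : (0:ℝ) < t := ht
    have h1 : ∫ s in Ioi (0:ℝ), fker s t
        = Real.sin t ^ 2 * ∫ s in Ioi (0:ℝ), s ^ ((5:ℝ)/2 - 1) * Real.exp (-(t * s)) := by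
      rw [← integral_const_mul]
      refine setIntegral_congr_fun measurableSet_Ioi ?_
      intro s hs
      unfold fker
      have : (5:ℝ)/2 - 1 = 3/2 := by norm_num
      rw [this]
      ring_nf
    rw [h1, integral_rpow_mul_exp_neg_mul_Ioi (by norm_num : (0:ℝ) < 5/2) ht0]
    have h2 : ((1:ℝ)/t) ^ ((5:ℝ)/2) = t ^ (-(5:ℝ)/2) := by
      rw [one_div, Real.inv_rpow ht0.le, ← Real.rpow_neg ht0.le]
      norm_num
    rw [h2]
    ring
  rw [hswap, hRHS, hGamma] at hLHS
  have hsq : (0:ℝ) < Real.sqrt π := Real.sqrt_pos.mpr Real.pi_pos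
  have hself := Real.mul_self_sqrt Real.pi_pos.le
  nlinarith [hLHS, hsq, hself]

lemma sinc_sq_of_ne {t : ℝ} (ht : t ≠ 0) : sinc_ t ^ 2 = Real.sin t ^ 2 / t ^ 2 := by
  rw [sinc_, if_neg ht, div_pow]

lemma sinc_sq_le_one (t : ℝ) : sinc_ t ^ 2 ≤ 1 := by
  by_cases ht : t = 0
  · simp [sinc_, ht]
  · rw [sinc_sq_of_ne ht]
    have h1 : Real.sin t ^ 2 ≤ t ^ 2 := Real.sin_sq_le_sq
    have h2 : (0:ℝ) < t ^ 2 := by positivity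
    rw [div_le_one h2]
    exact h1

lemma sinc_sq_nonneg (t : ℝ) : 0 ≤ sinc_ t ^ 2 := sq_nonneg _

lemma measurable_sinc : Measurable sinc_ := by
  unfold sinc_
  exact Measurable.ite (by simp [Set.setOf_eq_eq_singleton]) measurable_const
    (Real.measurable_sin.div measurable_id)

lemma sinc_sq_bound (x : ℝ) : ‖sinc_ (x ^ 2) ^ 2‖ ≤ 2 * (1 + x ^ 2)⁻¹ := by
  rw [Real.norm_eq_abs, abs_of_nonneg (sinc_sq_nonneg _)]
  have h6 : (0:ℝ) < 1 + x ^ 2 := by positivity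
  by_cases hx : x ^ 2 ≤ 1
  · calc sinc_ (x ^ 2) ^ 2 ≤ 1 := sinc_sq_le_one _
    _ ≤ 2 * (1 + x ^ 2)⁻¹ := by
        rw [le_mul_inv_iff₀ h6]; linarith
  · push_neg at hx
    have hx0 : x ^ 2 ≠ 0 := by nlinarith
    rw [sinc_sq_of_ne hx0]
    have h1 : Real.sin (x ^ 2) ^ 2 ≤ 1 := by
      have := Real.abs_sin_le_one (x ^ 2)
      calc Real.sin (x ^ 2) ^ 2 = |Real.sin (x ^ 2)| ^ 2 := by rw [sq_abs]
      _ ≤ 1 := by nlinarith [abs_nonneg (Real.sin (x ^ 2))]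
    have h2 : (0:ℝ) < (x ^ 2) ^ 2 := by positivity
    calc Real.sin (x ^ 2) ^ 2 / (x ^ 2) ^ 2 ≤ 1 / (x ^ 2) ^ 2 := by gcongr
    _ ≤ 2 * (1 + x ^ 2)⁻¹ := by
        rw [inv_eq_one_div, mul_one_div, div_le_div_iff₀ h2 h6]
        nlinarith

lemma integrable_sinc_sq : Integrable (fun x : ℝ => (sinc_ (x ^ 2)) ^ 2) := by
  refine (integrable_inv_one_add_sq.const_mul 2).mono' ?_ (ae_of_all _ sinc_sq_bound)
  exact ((_root_.measurable_sinc.comp (measurable_id.pow_const 2)).pow_const 2).aestronglyMeasurable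

theorem integral_sinc_sq :
    Integrable (fun x : ℝ => (sinc_ (x ^ 2)) ^ 2) ∧
    ∫ x : ℝ, (sinc_ (x ^ 2)) ^ 2 = 4 * Real.sqrt Real.pi / 3 := by
  refine ⟨integrable_sinc_sq, ?_⟩
  have habs : (fun x : ℝ => sinc_ (x ^ 2) ^ 2) = fun x : ℝ => sinc_ (|x| ^ 2) ^ 2 :=
    funext fun x => by rw [sq_abs]
  rw [habs, integral_comp_abs (f := fun y : ℝ => sinc_ (y ^ 2) ^ 2)]
  have hhalf : ∫ x in Ioi (0:ℝ), sinc_ (x ^ 2) ^ 2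
      = ∫ t in Ioi (0:ℝ), (t ^ (-(1:ℝ)/2) * sinc_ t ^ 2) / 2 := by
    rw [← integral_comp_rpow_Ioi (fun t => (t ^ (-(1:ℝ)/2) * sinc_ t ^ 2) / 2) (p := 2) two_ne_zero]
    refine (setIntegral_congr_fun measurableSet_Ioi ?_).symm
    intro x hx
    dsimp only
    have hx0 : (0:ℝ) < x := hx
    have h1 : x ^ (2:ℝ) = x ^ (2:ℕ) := by rw [← Real.rpow_natCast x 2]; norm_num
    have h2 : (x ^ (2:ℝ)) ^ (-(1:ℝ)/2) = x⁻¹ := by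
      rw [← Real.rpow_mul hx0.le]
      norm_num
      exact Real.rpow_neg_one x
    have h3 : x ^ ((2:ℝ) - 1) = x := by norm_num
    rw [smul_eq_mul, h2, h3, h1]
    field_simp
    ring
  have hval : ∫ t in Ioi (0:ℝ), (t ^ (-(1:ℝ)/2) * sinc_ t ^ 2) / 2
      = (1/2) * ∫ t in Ioi (0:ℝ), Real.sin t ^ 2 * t ^ (-(5:ℝ)/2) := by
    rw [← integral_const_mul]
    refine setIntegral_congr_fun measurableSet_Ioi ?_
    intro t ht
    have ht0 : (0:ℝ) < t := ht
    dsimp only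
    rw [sinc_sq_of_ne ht0.ne']
    have h1 : t ^ (-(1:ℝ)/2) / t ^ (2:ℕ) = t ^ (-(5:ℝ)/2) := by
      rw [show ((t:ℝ) ^ (2:ℕ)) = t ^ ((2:ℕ):ℝ) from (Real.rpow_natCast t 2).symm,
        ← Real.rpow_sub ht0]
      norm_num
    calc t ^ (-(1:ℝ)/2) * (Real.sin t ^ 2 / t ^ 2) / 2
        = (t ^ (-(1:ℝ)/2) / t ^ (2:ℕ)) * Real.sin t ^ 2 / 2 := by ring
      _ = 1/2 * (Real.sin t ^ 2 * t ^ (-(5:ℝ)/2)) := by rw [h1]; ring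
  rw [hhalf, hval, keyI]
  ring
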